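/- Let B be a C*-algebra, let D be a hereditary subalgebra of B, and let (f_t)_{t∈Λ} be a net in D, indexed by a directed set Λ, such that 0 ≤ f_t and ‖f_t‖ ≤ 1 for every t, f_s ≤ f_t whenever s ≤ t, and for every d ∈ D the net d* f_t d converges to d* d in the weak topology σ(B, B*) (that is, φ(d* f_t d) → φ(d* d) for every bounded linear functional φ on B). Then (f_t) is a contractive approximate identity for D: ‖f_t d − d‖ → 0 and ‖d f_t − d‖ → 0 in norm for every d ∈ D. -/

import Mathlib

open scoped Pointwise
open Filter Topology

/-- `D` is a hereditary subalgebra of the C*-algebra `B`: a norm-closed *-subalgebra such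
that `0 ≤ b ≤ d` with `d ∈ D` implies `b ∈ D`. -/
def IsHereditarySubalgebra {B : Type*} [NonUnitalCStarAlgebra B] [PartialOrder B]
    [StarOrderedRing B] (D : NonUnitalStarSubalgebra ℂ B) : Prop :=
  IsClosed (D : Set B) ∧ ∀ b d : B, d ∈ D → 0 ≤ b → b ≤ d → b ∈ D

/-- The left ideal associated with a hereditary subalgebra `D` of `B`: the norm closure of
the linear span of products `b * d` with `b ∈ B`, `d ∈ D`. -/
def leftIdealOf {B : Type*} [NonUnitalCStarAlgebra B]
    (D : NonUnitalStarSubalgebra ℂ B) : Set B :=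
  closure ((Submodule.span ℂ {x : B | ∃ b : B, ∃ d ∈ D, x = b * d} : Submodule ℂ B) : Set B)

/-- A decreasing net of nonnegative elements in a C*-algebra which tends to `0` weakly
tends to `0` in norm. -/
lemma aux_norm_tendsto {B : Type*} [NonUnitalCStarAlgebra B] [PartialOrder B]
    [StarOrderedRing B] {Λ : Type*} [Preorder Λ] [IsDirected Λ (· ≤ ·)] [Nonempty Λ]
    (g : Λ → B) (hg0 : ∀ t, 0 ≤ g t) (hanti : ∀ s t : Λ, s ≤ t → g t ≤ g s)
    (hφ : ∀ φ : B →L[ℂ] ℂ, Tendsto (fun t => φ (g t)) atTop (𝓝 0)) :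
    Tendsto (fun t => ‖g t‖) atTop (𝓝 0) := by
  have hna : Antitone fun t => ‖g t‖ := fun s t hst =>
    CStarAlgebra.norm_le_norm_of_nonneg_of_le (hg0 t) (hanti s t hst)
  have hbdd : BddBelow (Set.range fun t => ‖g t‖) := by
    refine ⟨0, ?_⟩
    rintro x ⟨t, rfl⟩
    positivity
  have hlim := tendsto_atTop_ciInf hna hbdd
  set α := ⨅ t, ‖g t‖ with hα
  have hα0 : 0 ≤ α := le_ciInf fun t => norm_nonneg _
  rcases eq_or_lt_of_le hα0 with h | h
  · rwa [← h] at hlim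
  · exfalso
    -- every point of the convex hull of the range of `g` has norm at least `α`
    have key : ∀ x ∈ convexHull ℝ (Set.range g), α ≤ ‖x‖ := by
      intro x hx
      rw [convexHull_eq] at hx
      obtain ⟨ι, t, w, z, hw0, hw1, hz, rfl⟩ := hx
      have hz' : ∀ i, ∃ s : Λ, i ∈ t → z i = g s := by
        intro i
        by_cases hi : i ∈ t
        · obtain ⟨s, hs⟩ := hz i hi
          exact ⟨s, fun _ => hs.symm⟩
        · exact ⟨Classical.arbitrary Λ, fun h => absurd h hi⟩
      choose τ hτ using hz'
      classical
      obtain ⟨M, hM⟩ := (t.image τ).exists_le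
      have hM' : ∀ i ∈ t, τ i ≤ M := fun i hi => hM _ (Finset.mem_image_of_mem τ hi)
      rw [Finset.centerMass_eq_of_sum_1 _ _ hw1]
      have hgM : g M ≤ ∑ i ∈ t, w i • z i := by
        have : g M = ∑ i ∈ t, w i • g M := by
          rw [← Finset.sum_smul, hw1, one_smul]
        rw [this]
        refine Finset.sum_le_sum fun i hi => ?_
        rw [← sub_nonneg, ← smul_sub]
        refine smul_nonneg (hw0 i hi) ?_
        rw [sub_nonneg, hτ i hi]
        exact hanti _ _ (hM' i hi)
      calc α ≤ ‖g M‖ := ciInf_le hbdd M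
        _ ≤ ‖∑ i ∈ t, w i • z i‖ :=
          CStarAlgebra.norm_le_norm_of_nonneg_of_le (hg0 M) hgM
    have key' : ∀ x ∈ closure (convexHull ℝ (Set.range g)), α ≤ ‖x‖ := fun x hx =>
      closure_minimal (fun y hy => key y hy : convexHull ℝ (Set.range g) ⊆ {y | α ≤ ‖y‖})
        (isClosed_le continuous_const continuous_norm) hx
    have h0 : (0 : B) ∉ closure (convexHull ℝ (Set.range g)) := by
      intro h0
      have := key' 0 h0
      rw [norm_zero] at this
      exact absurd this (not_le.mpr h)
    obtain ⟨φ, u, hu, hu0⟩ :=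
      RCLike.geometric_hahn_banach_closed_point (𝕜 := ℂ)
        ((convex_convexHull ℝ (Set.range g)).closure) isClosed_closure h0
    rw [map_zero, map_zero] at hu0
    -- `re (φ (g t)) < u < 0` for all `t`, but `re (φ (g t)) → 0`
    have hre : Tendsto (fun t => RCLike.re (φ (g t))) atTop (𝓝 0) := by
      have := (RCLike.continuous_re.tendsto (0 : ℂ)).comp (hφ φ)
      simpa [Function.comp_def] using this
    have hev : ∀ᶠ t in (atTop : Filter Λ), u < RCLike.re (φ (g t)) :=
      hre.eventually (eventually_gt_nhds hu0)
    obtain ⟨t, ht⟩ := hev.exists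
    have hlt : RCLike.re (φ (g t)) < u :=
      hu (g t) (subset_closure (subset_convexHull ℝ _ (Set.mem_range_self t)))
    exact absurd ht (not_lt.mpr hlt.le)

/-- Lemma 5.2(1) of the paper.  Let `D` be a hereditary subalgebra of a
C*-algebra `B` and `(f_t)` an increasing net of positive contractions in `D` such that
`d* f_t d → d* d` weakly for every `d ∈ D`.  Then `(f_t)` is a contractive approximate
identity for `D`. -/
theorem stmt_6 {B : Type*} [NonUnitalCStarAlgebra B] [PartialOrder B] [StarOrderedRing B]
    (D : NonUnitalStarSubalgebra ℂ B) (hD : IsHereditarySubalgebra D)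
    {Λ : Type*} [Preorder Λ] [IsDirected Λ (· ≤ ·)] [Nonempty Λ]
    (f : Λ → B) (hfD : ∀ t, f t ∈ D) (hf0 : ∀ t, 0 ≤ f t) (hf1 : ∀ t, ‖f t‖ ≤ 1)
    (hmono : ∀ s t : Λ, s ≤ t → f s ≤ f t)
    (hweak : ∀ d ∈ D, ∀ φ : B →L[ℂ] ℂ,
      Tendsto (fun t => φ (star d * f t * d)) atTop (𝓝 (φ (star d * d)))) :
    (∀ d ∈ D, Tendsto (fun t => ‖f t * d - d‖) atTop (𝓝 0)) ∧
    (∀ d ∈ D, Tendsto (fun t => ‖d * f t - d‖) atTop (𝓝 0)) := by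
  have hsa : ∀ t, IsSelfAdjoint (f t) := fun t => .of_nonneg (hf0 t)
  -- `f t * f t ≤ f t`
  have hxx : ∀ t, f t * f t ≤ f t := by
    intro t
    set s := CFC.sqrt (f t) with hs
    have hs0 : 0 ≤ s := CFC.sqrt_nonneg _
    have hss : s * s = f t := CFC.sqrt_mul_sqrt_self (f t) (hf0 t)
    have h1 : f t * f t = star s * f t * s := by
      rw [(IsSelfAdjoint.of_nonneg hs0).star_eq, ← hss]
      noncomm_ring
    calc f t * f t = star s * f t * s := h1
      _ ≤ ‖f t‖ • (star s * s) := CStarAlgebra.star_left_conjugate_le_norm_smul (hsa t)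
      _ = ‖f t‖ • f t := by rw [(IsSelfAdjoint.of_nonneg hs0).star_eq, hss]
      _ ≤ f t := by
        rw [← sub_nonneg]
        have hrw : f t - ‖f t‖ • f t = (1 - ‖f t‖) • f t := by
          rw [sub_smul, one_smul]
        rw [hrw]
        exact smul_nonneg (by linarith [hf1 t]) (hf0 t)
  have main : ∀ d ∈ D, Tendsto (fun t => ‖f t * d - d‖) atTop (𝓝 0) := by
    intro d hd
    set g : Λ → B := fun t => star d * d - star d * f t * d with hg
    have hg0 : ∀ t, 0 ≤ g t := by
      intro t
      rw [sub_nonneg]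
      calc star d * f t * d ≤ ‖f t‖ • (star d * d) :=
            CStarAlgebra.star_left_conjugate_le_norm_smul (hsa t)
        _ ≤ star d * d := by
          rw [← sub_nonneg]
          have hrw : star d * d - ‖f t‖ • (star d * d) = (1 - ‖f t‖) • (star d * d) := by
            rw [sub_smul, one_smul]
          rw [hrw]
          exact smul_nonneg (by linarith [hf1 t]) (star_mul_self_nonneg d)
    have hanti : ∀ s t : Λ, s ≤ t → g t ≤ g s := fun s t hst =>
      sub_le_sub_left (star_left_conjugate_le_conjugate (hmono s t hst) d) _
    have hφ : ∀ φ : B →L[ℂ] ℂ, Tendsto (fun t => φ (g t)) atTop (𝓝 0) := by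
      intro φ
      have h2 : Tendsto (fun t => φ (star d * d) - φ (star d * f t * d)) atTop
          (𝓝 (φ (star d * d) - φ (star d * d))) :=
        tendsto_const_nhds.sub (hweak d hd φ)
      rw [sub_self] at h2
      refine h2.congr fun t => ?_
      simp [g, map_sub]
    have hnorm := aux_norm_tendsto g hg0 hanti hφ
    have key : ∀ t, ‖f t * d - d‖ ≤ Real.sqrt ‖g t‖ := by
      intro t
      have h1 : star (f t * d - d) * (f t * d - d) ≤ g t := by
        rw [← sub_nonneg]
        have heq : g t - star (f t * d - d) * (f t * d - d)
            = star d * (f t - f t * f t) * d := by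
          simp only [hg, star_sub, star_mul, (hsa t).star_eq]
          noncomm_ring
        rw [heq]
        exact star_left_conjugate_nonneg (sub_nonneg.mpr (hxx t)) d
      have h2 : ‖f t * d - d‖ ^ 2 ≤ ‖g t‖ := by
        calc ‖f t * d - d‖ ^ 2 = ‖star (f t * d - d) * (f t * d - d)‖ := by
              rw [CStarRing.norm_star_mul_self, sq]
          _ ≤ ‖g t‖ :=
            CStarAlgebra.norm_le_norm_of_nonneg_of_le (star_mul_self_nonneg _) h1
      exact Real.le_sqrt_of_sq_le h2
    have hsq : Tendsto (fun t => Real.sqrt ‖g t‖) atTop (𝓝 0) := by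
      have := (Real.continuous_sqrt.tendsto 0).comp hnorm
      simpa [Function.comp_def] using this
    exact squeeze_zero (fun t => norm_nonneg _) key hsq
  refine ⟨main, fun d hd => ?_⟩
  have h := main (star d) (star_mem hd)
  refine h.congr fun t => ?_
  rw [← norm_star (d * f t - d), star_sub, star_mul, (hsa t).star_eq]
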